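/- Let B be a Borel probability measure on [0,1] and let u, v be nonnegative Borel measures on ℝ≥0 with finite second moments. Then ∫ x² d(T_B[u,v])(x) = (1 − 2λ₁,B + λ₂,B) · v(ℝ≥0) · ∫ x² du(x) + λ₂,B · u(ℝ≥0) · ∫ x² dv(x) + 2(1 − λ₁,B)λ₁,B · (∫ x du(x)) · (∫ x dv(x)), where λ₁,B = ∫₀¹ z dB(z) and λ₂,B = ∫₀¹ z² dB(z). -/

import Mathlib

open MeasureTheory Filter Topology
open scoped ENNReal NNReal

private lemma aux_fst {α β : Type*} [MeasurableSpace α] [MeasurableSpace β]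
    {μ : Measure α} {ν : Measure β} [IsFiniteMeasure ν] {f : α → ℝ} (hf : Integrable f μ) :
    Integrable (fun z : α × β => f z.1) (μ.prod ν) := by
  simpa using hf.mul_prod (integrable_const (1:ℝ))

private lemma aux_snd {α β : Type*} [MeasurableSpace α] [MeasurableSpace β]
    {μ : Measure α} {ν : Measure β} [IsFiniteMeasure μ] [SFinite ν] {f : β → ℝ} (hf : Integrable f ν) :
    Integrable (fun z : α × β => f z.2) (μ.prod ν) := by
  simpa using (integrable_const (1:ℝ)).mul_prod hf

private lemma int_fst {α β : Type*} [MeasurableSpace α] [MeasurableSpace β]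
    (μ : Measure α) (ν : Measure β) [SFinite μ] [SFinite ν] (f : α → ℝ) :
    ∫ z : α × β, f z.1 ∂(μ.prod ν) = (∫ x, f x ∂μ) * (ν Set.univ).toReal := by
  simpa [mul_comm, Measure.real] using integral_prod_mul (μ := μ) (ν := ν) f (fun _ : β => (1:ℝ))

private lemma int_snd {α β : Type*} [MeasurableSpace α] [MeasurableSpace β]
    (μ : Measure α) (ν : Measure β) [SFinite μ] [SFinite ν] (f : β → ℝ) :
    ∫ z : α × β, f z.2 ∂(μ.prod ν) = (∫ x, f x ∂ν) * (μ Set.univ).toReal := by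
  simpa [mul_comm, Measure.real] using integral_prod_mul (μ := μ) (ν := ν) (fun _ : α => (1:ℝ)) f

private lemma fin_of_moment (w : MeasureTheory.Measure ℝ)
    (hw : ∫⁻ x, ENNReal.ofReal (1 + x ^ 2) ∂w ≠ ⊤) : IsFiniteMeasure w := by
  constructor
  have : w Set.univ ≤ ∫⁻ x, ENNReal.ofReal (1 + x ^ 2) ∂w := by
    calc w Set.univ = ∫⁻ _, 1 ∂w := by simp
      _ ≤ ∫⁻ x, ENNReal.ofReal (1 + x ^ 2) ∂w := by
          apply lintegral_mono; intro x
          rw [show (1:ℝ≥0∞) = ENNReal.ofReal 1 by simp]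
          exact ENNReal.ofReal_le_ofReal (by nlinarith [sq_nonneg x])
  exact lt_of_le_of_lt this hw.lt_top

private lemma int_of_moment (w : MeasureTheory.Measure ℝ)
    (hw : ∫⁻ x, ENNReal.ofReal (1 + x ^ 2) ∂w ≠ ⊤) :
    Integrable (fun x : ℝ => 1 + x ^ 2) w := by
  refine ⟨(measurable_const.add (measurable_id.pow_const 2)).aestronglyMeasurable, ?_⟩
  rw [HasFiniteIntegral]
  have h : ∀ x : ℝ, ‖1 + x ^ 2‖ₑ = ENNReal.ofReal (1 + x ^ 2) := fun x => by
    rw [← Real.enorm_eq_ofReal (by positivity)]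
  simp_rw [h]
  exact hw.lt_top

/-- The transfer operator `T_B[u,v]`: the pushforward of `B ⊗ B ⊗ u ⊗ v` under
`(z₁, z₂, x₁, x₂) ↦ x₁ (1 - z₁) + x₂ z₂`. -/
noncomputable def transferT (B u v : Measure ℝ) : Measure ℝ :=
  Measure.map (fun q : (ℝ × ℝ) × ℝ × ℝ => q.2.1 * (1 - q.1.1) + q.2.2 * q.1.2)
    ((B.prod B).prod (u.prod v))

/-- Second moment of `T_B[u,v]`, for `u, v` nonnegative measures on `ℝ≥0` with finite
second moments: with `λ₁ = ∫ z dB(z)` and `λ₂ = ∫ z² dB(z)`,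
`∫ x² dT_B[u,v] = (1 - 2λ₁ + λ₂) v(ℝ≥0) ∫ x² du + λ₂ u(ℝ≥0) ∫ x² dv
  + 2 (1-λ₁) λ₁ (∫ x du)(∫ x dv)`. -/
theorem stmt6 (B : Measure ℝ) [IsProbabilityMeasure B] (hB : B (Set.Icc (0:ℝ) 1)ᶜ = 0)
    (u v : Measure ℝ) (hu0 : u (Set.Iio (0:ℝ)) = 0) (hv0 : v (Set.Iio (0:ℝ)) = 0)
    (hu2 : ∫⁻ x, ENNReal.ofReal (1 + x ^ 2) ∂u ≠ ⊤)
    (hv2 : ∫⁻ x, ENNReal.ofReal (1 + x ^ 2) ∂v ≠ ⊤) :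
    ∫ x, x ^ 2 ∂(transferT B u v) =
      (1 - 2 * (∫ z, z ∂B) + ∫ z, z ^ 2 ∂B) * (v Set.univ).toReal * ∫ x, x ^ 2 ∂u
        + (∫ z, z ^ 2 ∂B) * (u Set.univ).toReal * ∫ x, x ^ 2 ∂v
        + 2 * (1 - ∫ z, z ∂B) * (∫ z, z ∂B) * ((∫ x, x ∂u) * (∫ x, x ∂v)) := by
  haveI hufin : IsFiniteMeasure u := fin_of_moment u hu2
  haveI hvfin : IsFiniteMeasure v := fin_of_moment v hv2
  haveI : SFinite B := inferInstance
  haveI : SFinite u := inferInstance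
  haveI : SFinite v := inferInstance
  haveI : SFinite (B.prod B) := Measure.prod.instSFinite
  haveI : SFinite (u.prod v) := Measure.prod.instSFinite
  have hu_sq : Integrable (fun x : ℝ => x ^ 2) u :=
    (int_of_moment u hu2).mono' (measurable_id.pow_const 2).aestronglyMeasurable
      (Eventually.of_forall fun x => by
        rw [Real.norm_eq_abs, abs_of_nonneg (sq_nonneg x)]; nlinarith)
  have hv_sq : Integrable (fun x : ℝ => x ^ 2) v :=
    (int_of_moment v hv2).mono' (measurable_id.pow_const 2).aestronglyMeasurable
      (Eventually.of_forall fun x => by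
        rw [Real.norm_eq_abs, abs_of_nonneg (sq_nonneg x)]; nlinarith)
  have hu_id : Integrable (fun x : ℝ => x) u :=
    (int_of_moment u hu2).mono' measurable_id.aestronglyMeasurable
      (Eventually.of_forall fun x => by
        rw [Real.norm_eq_abs]; rcases abs_cases x with ⟨h, _⟩ | ⟨h, _⟩ <;> nlinarith [sq_nonneg (x-1), sq_nonneg (x+1)])
  have hv_id : Integrable (fun x : ℝ => x) v :=
    (int_of_moment v hv2).mono' measurable_id.aestronglyMeasurable
      (Eventually.of_forall fun x => by
        rw [Real.norm_eq_abs]; rcases abs_cases x with ⟨h, _⟩ | ⟨h, _⟩ <;> nlinarith [sq_nonneg (x-1), sq_nonneg (x+1)])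
  -- B is a.e. supported on [0,1]
  have hBae : ∀ᵐ z ∂B, z ∈ Set.Icc (0:ℝ) 1 := by
    rw [ae_iff]
    convert hB using 2
    rfl
  have hBz : Integrable (fun z : ℝ => z) B :=
    (integrable_const (1:ℝ)).mono' measurable_id.aestronglyMeasurable
      (hBae.mono fun z hz => by rw [Real.norm_eq_abs, abs_of_nonneg hz.1]; exact hz.2)
  have hBz2 : Integrable (fun z : ℝ => z ^ 2) B :=
    (integrable_const (1:ℝ)).mono' (measurable_id.pow_const 2).aestronglyMeasurable
      (hBae.mono fun z hz => by
        rw [Real.norm_eq_abs, abs_of_nonneg (sq_nonneg z)]; nlinarith [hz.1, hz.2])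
  have hB1z : Integrable (fun z : ℝ => 1 - z) B := (integrable_const (1:ℝ)).sub hBz
  have hB1z2 : Integrable (fun z : ℝ => (1 - z) ^ 2) B :=
    (integrable_const (1:ℝ)).mono'
      ((measurable_const.sub measurable_id).pow_const 2).aestronglyMeasurable
      (hBae.mono fun z hz => by
        rw [Real.norm_eq_abs, abs_of_nonneg (sq_nonneg _)]; nlinarith [hz.1, hz.2])
  -- unfold the map
  have hmap : Measurable (fun q : (ℝ × ℝ) × ℝ × ℝ => q.2.1 * (1 - q.1.1) + q.2.2 * q.1.2) := by
    fun_prop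
  rw [transferT, integral_map hmap.aemeasurable
    ((measurable_id'.pow_const 2).aestronglyMeasurable)]
  -- split the square
  have key : (fun q : (ℝ × ℝ) × ℝ × ℝ => (q.2.1 * (1 - q.1.1) + q.2.2 * q.1.2) ^ 2)
      = fun q : (ℝ × ℝ) × ℝ × ℝ =>
        (fun z : ℝ × ℝ => (1 - z.1) ^ 2) q.1 * (fun x : ℝ × ℝ => x.1 ^ 2) q.2
        + ((fun z : ℝ × ℝ => z.2 ^ 2) q.1 * (fun x : ℝ × ℝ => x.2 ^ 2) q.2
          + (fun z : ℝ × ℝ => 2 * ((1 - z.1) * z.2)) q.1 * (fun x : ℝ × ℝ => x.1 * x.2) q.2) := by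
    funext q; ring
  have hI1 : Integrable (fun q : (ℝ × ℝ) × ℝ × ℝ =>
      (fun z : ℝ × ℝ => (1 - z.1) ^ 2) q.1 * (fun x : ℝ × ℝ => x.1 ^ 2) q.2)
      ((B.prod B).prod (u.prod v)) := (aux_fst hB1z2).mul_prod (aux_fst hu_sq)
  have hI2 : Integrable (fun q : (ℝ × ℝ) × ℝ × ℝ =>
      (fun z : ℝ × ℝ => z.2 ^ 2) q.1 * (fun x : ℝ × ℝ => x.2 ^ 2) q.2)
      ((B.prod B).prod (u.prod v)) := (aux_snd hBz2).mul_prod (aux_snd hv_sq)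
  have hI3 : Integrable (fun q : (ℝ × ℝ) × ℝ × ℝ =>
      (fun z : ℝ × ℝ => 2 * ((1 - z.1) * z.2)) q.1 * (fun x : ℝ × ℝ => x.1 * x.2) q.2)
      ((B.prod B).prod (u.prod v)) :=
    ((hB1z.mul_prod hBz).const_mul 2).mul_prod (hu_id.mul_prod hv_id)
  have hI23 : Integrable (fun q : (ℝ × ℝ) × ℝ × ℝ =>
      (fun z : ℝ × ℝ => z.2 ^ 2) q.1 * (fun x : ℝ × ℝ => x.2 ^ 2) q.2
        + (fun z : ℝ × ℝ => 2 * ((1 - z.1) * z.2)) q.1 * (fun x : ℝ × ℝ => x.1 * x.2) q.2)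
      ((B.prod B).prod (u.prod v)) := hI2.add hI3
  rw [show (∫ q : (ℝ × ℝ) × ℝ × ℝ, (q.2.1 * (1 - q.1.1) + q.2.2 * q.1.2) ^ 2
        ∂((B.prod B).prod (u.prod v)))
      = ∫ q : (ℝ × ℝ) × ℝ × ℝ,
        ((fun z : ℝ × ℝ => (1 - z.1) ^ 2) q.1 * (fun x : ℝ × ℝ => x.1 ^ 2) q.2
        + ((fun z : ℝ × ℝ => z.2 ^ 2) q.1 * (fun x : ℝ × ℝ => x.2 ^ 2) q.2
          + (fun z : ℝ × ℝ => 2 * ((1 - z.1) * z.2)) q.1 * (fun x : ℝ × ℝ => x.1 * x.2) q.2))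
        ∂((B.prod B).prod (u.prod v)) from by rw [← key],
    integral_add hI1 hI23, integral_add hI2 hI3,
    integral_prod_mul (μ := B.prod B) (ν := u.prod v)
      (fun z : ℝ × ℝ => (1 - z.1) ^ 2) (fun x : ℝ × ℝ => x.1 ^ 2),
    integral_prod_mul (μ := B.prod B) (ν := u.prod v)
      (fun z : ℝ × ℝ => z.2 ^ 2) (fun x : ℝ × ℝ => x.2 ^ 2),
    integral_prod_mul (μ := B.prod B) (ν := u.prod v)
      (fun z : ℝ × ℝ => 2 * ((1 - z.1) * z.2)) (fun x : ℝ × ℝ => x.1 * x.2),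
    int_fst B B (fun z : ℝ => (1 - z) ^ 2), int_fst u v (fun x : ℝ => x ^ 2),
    int_snd B B (fun z : ℝ => z ^ 2), int_snd u v (fun x : ℝ => x ^ 2)]
  rw [show (∫ z : ℝ × ℝ, 2 * ((1 - z.1) * z.2) ∂(B.prod B))
      = 2 * ∫ z : ℝ × ℝ, (fun a : ℝ => 1 - a) z.1 * (fun a : ℝ => a) z.2 ∂(B.prod B) from
      integral_const_mul 2 _,
    integral_prod_mul (μ := B) (ν := B) (fun a : ℝ => 1 - a) (fun a : ℝ => a),
    integral_prod_mul (μ := u) (ν := v) (fun a : ℝ => a) (fun a : ℝ => a)]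
  have e1 : ∫ z, (1 - z) ^ 2 ∂B = 1 - 2 * ∫ z, z ∂B + ∫ z, z ^ 2 ∂B := by
    have h : ∀ z : ℝ, (1 - z) ^ 2 = 1 - 2 * z + z ^ 2 := fun z => by ring
    simp_rw [h]
    have hsub : Integrable (fun z : ℝ => 1 - 2 * z) B := (integrable_const (1:ℝ)).sub (hBz.const_mul 2)
    rw [integral_add hsub hBz2,
      integral_sub (integrable_const (1:ℝ)) (hBz.const_mul 2), integral_const,
      integral_const_mul]
    simp
  have e2 : ∫ z, 1 - z ∂B = 1 - ∫ z, z ∂B := by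
    rw [integral_sub (integrable_const (1:ℝ)) hBz, integral_const]; simp
  rw [e1, e2, measure_univ]
  simp only [ENNReal.toReal_one]
  ring
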